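/- Assume B(t) is positive semidefinite for all t ≥ t0, its Hermitian nonnegative square root √B(t) is continuously differentiable on [t0, ∞), and F(t) is a continuous 2×2 matrix function on [t0, ∞) satisfying equation (3.21): √B(t) F(t) [A(t)√B(t) − (√B)'(t)] = A(t)√B(t) − (√B)'(t) for all t ≥ t0. Set P(t) = F(t)[A(t)√B(t) − (√B)'(t)] and Q(t) = √B(t) C(t) √B(t). If Z is a solution of the matrix Riccati equation Z' + Z B(t) Z + A*(t) Z + Z A(t) − C(t) = 0 on an interval I ⊆ [t0, ∞), then V(t) = √B(t) Z(t) √B(t) is a solution on I of the matrix Riccati equation V' + V² + P*(t) V + V P(t) − Q(t) = 0. -/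

import Mathlib

open Matrix Set Complex ComplexConjugate ComplexOrder

noncomputable section

/- STATEMENT 11: if Z solves Z' + Z B Z + A* Z + Z A - C = 0 on I, then
   V = √B Z √B solves V' + V² + P* V + V P - Q = 0 on I, where
   P = F (A √B - (√B)') and Q = √B C √B, with F a solution of (3.21). -/

abbrev Mat2 := Matrix (Fin 2) (Fin 2) ℂ

def EntryDeriv (Z : ℝ → Mat2) (D : Mat2) (t : ℝ) : Prop :=
  ∀ i j, HasDerivAt (fun s => Z s i j) (D i j) t

lemma entryDeriv_mul {X Y : ℝ → Mat2} {X' Y' : Mat2} {t : ℝ}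
    (hX : ∀ i j, HasDerivAt (fun s => X s i j) (X' i j) t)
    (hY : ∀ i j, HasDerivAt (fun s => Y s i j) (Y' i j) t) :
    ∀ i j, HasDerivAt (fun s => (X s * Y s) i j) ((X' * Y t + X t * Y') i j) t := by
  intro i j
  have h : HasDerivAt (fun s => ∑ k, X s i k * Y s k j)
      (∑ k, (X' i k * Y t k j + X t i k * Y' k j)) t :=
    HasDerivAt.fun_sum (fun k _ => (hX i k).mul (hY k j))
  simp only [Matrix.mul_apply, Matrix.add_apply]
  convert h using 1
  rw [Finset.sum_add_distrib]

theorem riccati_transform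
    (t0 : ℝ) (A B C S S' F : ℝ → Mat2)
    (hA : ∀ i j, ContinuousOn (fun t => A t i j) (Set.Ici t0))
    (hBc : ∀ i j, ContinuousOn (fun t => B t i j) (Set.Ici t0))
    (hCc : ∀ i j, ContinuousOn (fun t => C t i j) (Set.Ici t0))
    (hCherm : ∀ t, t0 ≤ t → (C t)ᴴ = C t)
    (hBpsd : ∀ t, t0 ≤ t → (B t).PosSemidef)
    -- S = √B, the Hermitian nonnegative square root, continuously differentiable:
    (hS : ∀ t, t0 ≤ t → (S t).PosSemidef ∧ S t * S t = B t)
    (hS' : ∀ t, t0 ≤ t → EntryDeriv S (S' t) t)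
    (hS'c : ∀ i j, ContinuousOn (fun t => S' t i j) (Set.Ici t0))
    -- F is a continuous solution of equation (3.21):
    (hFc : ∀ i j, ContinuousOn (fun t => F t i j) (Set.Ici t0))
    (hF : ∀ t, t0 ≤ t → S t * F t * (A t * S t - S' t) = A t * S t - S' t)
    (P Q : ℝ → Mat2)
    (hP : ∀ t, P t = F t * (A t * S t - S' t))
    (hQ : ∀ t, Q t = S t * C t * S t)
    (I : Set ℝ) (hI : I ⊆ Set.Ici t0)
    (Z Z' : ℝ → Mat2)
    (hZsol : ∀ t ∈ I, EntryDeriv Z (Z' t) t ∧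
      Z' t + Z t * B t * Z t + (A t)ᴴ * Z t + Z t * A t - C t = 0) :
    ∃ V' : ℝ → Mat2,
      ∀ t ∈ I, EntryDeriv (fun s => S s * Z s * S s) (V' t) t ∧
        V' t + (S t * Z t * S t) * (S t * Z t * S t)
          + (P t)ᴴ * (S t * Z t * S t) + (S t * Z t * S t) * P t - Q t = 0 := by
  refine ⟨fun t => S' t * Z t * S t + S t * Z' t * S t + S t * Z t * S' t, fun t ht => ?_⟩
  have ht0 : t0 ≤ t := hI ht
  obtain ⟨hZd, hZeq⟩ := hZsol t ht
  have hSd := hS' t ht0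
  -- entrywise derivative of V = S Z S
  have hderiv : EntryDeriv (fun s => S s * Z s * S s)
      (S' t * Z t * S t + S t * Z' t * S t + S t * Z t * S' t) t := by
    intro i j
    have h1 := entryDeriv_mul hSd hZd
    have h2 := entryDeriv_mul h1 hSd i j
    convert h2 using 2
    noncomm_ring
  refine ⟨hderiv, ?_⟩
  -- S is Hermitian
  have hSherm : (S t)ᴴ = S t := (hS t ht0).1.isHermitian
  -- S' is Hermitian
  have hS'herm : (S' t)ᴴ = S' t := by
    ext i j
    rw [Matrix.conjTranspose_apply]
    have h1 : HasDerivWithinAt (fun s => S s i j) (star (S' t j i)) (Set.Ici t0) t := by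
      refine ((hSd j i).star.hasDerivWithinAt).congr (fun y hy => ?_) ?_
      · exact ((hS y hy).1.isHermitian.apply i j).symm
      · exact ((hS t ht0).1.isHermitian.apply i j).symm
    have h2 : HasDerivWithinAt (fun s => S s i j) (S' t i j) (Set.Ici t0) t :=
      (hSd i j).hasDerivWithinAt
    have hu : UniqueDiffWithinAt ℝ (Set.Ici t0) t := uniqueDiffOn_Ici t0 t ht0
    rw [← h1.derivWithin hu, ← h2.derivWithin hu]
  -- key algebraic identities
  have hSP : S t * P t = A t * S t - S' t := by
    rw [hP, ← mul_assoc]; exact hF t ht0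
  have hPS : (P t)ᴴ * S t = S t * (A t)ᴴ - S' t := by
    have := congrArg Matrix.conjTranspose hSP
    simpa [Matrix.conjTranspose_mul, Matrix.conjTranspose_sub, hSherm, hS'herm] using this
  have hZ' : Z' t = C t - Z t * (S t * S t) * Z t - (A t)ᴴ * Z t - Z t * A t := by
    rw [(hS t ht0).2]
    have h := hZeq
    have : Z' t = Z' t + (Z t * B t * Z t + (A t)ᴴ * Z t + Z t * A t - C t)
        - (Z t * B t * Z t + (A t)ᴴ * Z t + Z t * A t - C t) := by noncomm_ring
    rw [this]
    rw [show Z' t + (Z t * B t * Z t + (A t)ᴴ * Z t + Z t * A t - C t)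
        = Z' t + Z t * B t * Z t + (A t)ᴴ * Z t + Z t * A t - C t by noncomm_ring, h]
    noncomm_ring
  have e1 : (P t)ᴴ * (S t * Z t * S t) = ((P t)ᴴ * S t) * (Z t * S t) := by noncomm_ring
  have e2 : (S t * Z t * S t) * P t = (S t * Z t) * (S t * P t) := by noncomm_ring
  beta_reduce
  rw [hZ', hQ, e1, e2, hPS, hSP]
  noncomm_ring
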